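/- Fix 1 < p < n in ℝⁿ, let μ be Lebesgue measure and dν(x) = |x|^{-p} dμ(x). Then for every 0 < ε ≤ p − 1, the two-measure space (ℝⁿ, euclidean metric, ν, μ) does NOT satisfy a (p−ε)-balance condition: there is no constant C > 0 such that (diam(B')/diam(B))^{p−ε} ν(B')/ν(B) ≤ C μ(B')/μ(B) for all balls B and B' = B(x',r') with x' ∈ B and 0 < r' ≤ diam(B). -/

import Mathlib

open MeasureTheory Metric Set ENNReal NNReal

noncomputable section

/-- `ν` is doubling with constant `c`. -/
def IsDoubling {X : Type*} [MetricSpace X] [MeasurableSpace X]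
    (ν : Measure X) (c : ℝ) : Prop :=
  ∀ (x : X) (r : ℝ), 0 < r → ν (Metric.ball x (2 * r)) ≤ ENNReal.ofReal c * ν (Metric.ball x r)

/-- `ν` is positive and finite on all balls. -/
def FinitePosOnBalls {X : Type*} [MetricSpace X] [MeasurableSpace X]
    (ν : Measure X) : Prop :=
  ∀ (x : X) (r : ℝ), 0 < r → 0 < ν (Metric.ball x r) ∧ ν (Metric.ball x r) < ⊤

/-- The `(q,p)`-balance condition with constant `C`:
`(diam B'/diam B) (ν B'/ν B)^{1/q} ≤ C^{1/p} (μ B'/μ B)^{1/p}` for all balls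
`B`, `B' = B(x',r')` with `x' ∈ B` and `0 < r' ≤ diam B`. -/
def Balance {X : Type*} [MetricSpace X] [MeasurableSpace X]
    (ν μ : Measure X) (q p C : ℝ) : Prop :=
  ∀ (x : X) (R : ℝ) (x' : X) (r' : ℝ), 0 < R → x' ∈ Metric.ball x R → 0 < r' →
    r' ≤ Metric.diam (Metric.ball x R) →
    (Metric.diam (Metric.ball x' r') / Metric.diam (Metric.ball x R)) *
        ((ν (Metric.ball x' r')).toReal / (ν (Metric.ball x R)).toReal) ^ (1 / q)
      ≤ C ^ (1 / p) *
        ((μ (Metric.ball x' r')).toReal / (μ (Metric.ball x R)).toReal) ^ (1 / p)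

/-- The `p`-balance condition with constant `C`:
`(diam B'/diam B)^p (ν B'/ν B) ≤ C (μ B'/μ B)` for all balls
`B`, `B' = B(x',r')` with `x' ∈ B` and `0 < r' ≤ diam B`. -/
def PBalance {X : Type*} [MetricSpace X] [MeasurableSpace X]
    (ν μ : Measure X) (p C : ℝ) : Prop :=
  ∀ (x : X) (R : ℝ) (x' : X) (r' : ℝ), 0 < R → x' ∈ Metric.ball x R → 0 < r' →
    r' ≤ Metric.diam (Metric.ball x R) →
    (Metric.diam (Metric.ball x' r') / Metric.diam (Metric.ball x R)) ^ p *
        ((ν (Metric.ball x' r')).toReal / (ν (Metric.ball x R)).toReal)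
      ≤ C * ((μ (Metric.ball x' r')).toReal / (μ (Metric.ball x R)).toReal)

lemma nu_ball_scale (n : ℕ) (p : ℝ) (r : ℝ) (hr : 0 < r) :
    ((volume : Measure (EuclideanSpace ℝ (Fin n))).withDensity
        fun x => ENNReal.ofReal (‖x‖ ^ (-p))) (ball 0 r)
    = ENNReal.ofReal (r ^ ((n : ℝ) - p)) *
      ((volume : Measure (EuclideanSpace ℝ (Fin n))).withDensity
        fun x => ENNReal.ofReal (‖x‖ ^ (-p))) (ball 0 1) := by
  set E := EuclideanSpace ℝ (Fin n)
  set f : E → ℝ≥0∞ := fun x => ENNReal.ofReal (‖x‖ ^ (-p)) with hfdef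
  have hf : Measurable f := by fun_prop
  have h1 : (fun x : E => r • x) ⁻¹' (ball 0 r) = ball 0 1 := by
    ext x
    simp [mem_ball_zero_iff, norm_smul, abs_of_pos hr, mul_lt_iff_lt_one_right hr]
  have h2 : ∀ x : E, f (r • x) = ENNReal.ofReal (r ^ (-p)) * f x := by
    intro x
    simp only [hfdef, norm_smul, Real.norm_eq_abs, abs_of_pos hr]
    rw [Real.mul_rpow hr.le (norm_nonneg _), ENNReal.ofReal_mul (Real.rpow_nonneg hr.le _)]
  have hmap := Measure.map_addHaar_smul (volume : Measure E) (ne_of_gt hr)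
  have hfn : (0:ℝ) < r ^ Module.finrank ℝ E := pow_pos hr _
  have way1 : ∫⁻ x in ball (0:E) r, f x ∂(Measure.map (fun x : E => r • x) volume)
      = ENNReal.ofReal (r ^ (-p)) *
        ((volume : Measure E).withDensity f) (ball 0 1) := by
    rw [setLIntegral_map measurableSet_ball hf (measurable_const_smul r), h1,
      withDensity_apply _ measurableSet_ball]
    simp_rw [h2]
    rw [lintegral_const_mul _ hf]
  have way2 : ∫⁻ x in ball (0:E) r, f x ∂(Measure.map (fun x : E => r • x) volume)
      = ENNReal.ofReal ((r ^ Module.finrank ℝ E)⁻¹) *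
        ((volume : Measure E).withDensity f) (ball 0 r) := by
    rw [hmap, withDensity_apply _ measurableSet_ball, Measure.restrict_smul,
      lintegral_smul_measure, abs_of_pos (inv_pos.2 hfn), smul_eq_mul]
  have key : ENNReal.ofReal ((r ^ Module.finrank ℝ E)⁻¹) *
        ((volume : Measure E).withDensity f) (ball 0 r)
      = ENNReal.ofReal (r ^ (-p)) * ((volume : Measure E).withDensity f) (ball 0 1) := by
    rw [← way2, way1]
  have ha0 : ENNReal.ofReal ((r ^ Module.finrank ℝ E)⁻¹) ≠ 0 := by
    simp [ENNReal.ofReal_eq_zero, not_le, inv_pos, hfn]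
  have hainv : (ENNReal.ofReal ((r ^ Module.finrank ℝ E)⁻¹))⁻¹
      = ENNReal.ofReal (r ^ Module.finrank ℝ E) := by
    rw [ENNReal.ofReal_inv_of_pos hfn, inv_inv]
  calc ((volume : Measure E).withDensity f) (ball 0 r)
      = (ENNReal.ofReal ((r ^ Module.finrank ℝ E)⁻¹))⁻¹ *
        (ENNReal.ofReal ((r ^ Module.finrank ℝ E)⁻¹) *
          ((volume : Measure E).withDensity f) (ball 0 r)) := by
        rw [← mul_assoc, ENNReal.inv_mul_cancel ha0 ENNReal.ofReal_ne_top, one_mul]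
    _ = ENNReal.ofReal (r ^ Module.finrank ℝ E) *
        (ENNReal.ofReal (r ^ (-p)) * ((volume : Measure E).withDensity f) (ball 0 1)) := by
        rw [key, hainv]
    _ = ENNReal.ofReal (r ^ ((n : ℝ) - p)) *
        ((volume : Measure E).withDensity f) (ball 0 1) := by
        rw [← mul_assoc, ← ENNReal.ofReal_mul hfn.le]
        congr 2
        rw [finrank_euclideanSpace_fin, ← Real.rpow_natCast r n, ← Real.rpow_add hr]
        ring_nf

lemma nu_ball_lt_top (n : ℕ) (p : ℝ) (hn : 1 < n) (hp0 : 0 < p) (hpn : p < n) :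
    ((volume : Measure (EuclideanSpace ℝ (Fin n))).withDensity
        fun x => ENNReal.ofReal (‖x‖ ^ (-p))) (ball 0 1) < ⊤ := by
  have hnfin : Nonempty (Fin n) := ⟨⟨0, by omega⟩⟩
  have hnt : Nontrivial (EuclideanSpace ℝ (Fin n)) := inferInstance
  set E := EuclideanSpace ℝ (Fin n)
  set f : E → ℝ≥0∞ := fun x => ENNReal.ofReal (‖x‖ ^ (-p)) with hfdef
  set ν := (volume : Measure E).withDensity f with hν
  set V := (volume : Measure E) (ball 0 1) with hV
  have hVt : V < ⊤ := measure_ball_lt_top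
  set q : ℝ := (1/2 : ℝ) ^ ((n : ℝ) - p) with hq
  have hq0 : 0 ≤ q := Real.rpow_nonneg (by norm_num) _
  have hq1 : q < 1 := Real.rpow_lt_one (by norm_num) (by norm_num) (by linarith)
  set A : ℕ → Set E := fun k => closedBall 0 ((1/2 : ℝ) ^ k) \ ball 0 ((1/2 : ℝ) ^ (k + 1))
    with hA
  have hAmeas : ∀ k, MeasurableSet (A k) := fun k =>
    measurableSet_closedBall.diff measurableSet_ball
  -- the shells cover the punctured ball
  have hcover : ball (0 : E) 1 ⊆ {0} ∪ ⋃ k, A k := by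
    intro x hx
    rcases eq_or_ne x 0 with rfl | hx0
    · exact Or.inl rfl
    · right
      have hnx : 0 < ‖x‖ := norm_pos_iff.2 hx0
      have hlt1 : ‖x‖ < 1 := mem_ball_zero_iff.1 hx
      have hex : ∃ m : ℕ, (1/2 : ℝ) ^ m < ‖x‖ := exists_pow_lt_of_lt_one hnx (by norm_num)
      have hm0 : Nat.find hex ≠ 0 := by
        intro h
        have := Nat.find_spec hex
        rw [h] at this
        simp at this
        linarith
      obtain ⟨k, hk⟩ : ∃ k, Nat.find hex = k + 1 := ⟨Nat.find hex - 1, by omega⟩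
      refine mem_iUnion.2 ⟨k, ?_, ?_⟩
      · have : ¬ ((1/2 : ℝ) ^ k < ‖x‖) := Nat.find_min hex (by omega)
        exact mem_closedBall_zero_iff.2 (not_lt.1 this)
      · have : (1/2 : ℝ) ^ (k + 1) < ‖x‖ := by
          have := Nat.find_spec hex
          rwa [hk] at this
        simp only [mem_ball_zero_iff, not_lt]
        exact this.le
  -- bound on each shell
  have hbound : ∀ k : ℕ, ν (A k) ≤ ENNReal.ofReal (2 ^ p * q ^ k) * V := by
    intro k
    have hr1 : (0:ℝ) < (1/2 : ℝ) ^ (k+1) := by positivity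
    have hdens : ∀ x ∈ A k, f x ≤ ENNReal.ofReal (((1/2 : ℝ) ^ (k+1)) ^ (-p)) := by
      intro x hx
      have hxlb : (1/2 : ℝ) ^ (k+1) ≤ ‖x‖ := by
        have := hx.2
        simpa only [mem_ball_zero_iff, not_lt] using this
      exact ENNReal.ofReal_le_ofReal
        (Real.rpow_le_rpow_of_nonpos hr1 hxlb (neg_nonpos.2 hp0.le))
    have hhalf : (0:ℝ) < 1/2 := by norm_num
    have hcalc : ((1/2 : ℝ) ^ (k+1)) ^ (-p) * ((1/2 : ℝ) ^ k) ^ (Module.finrank ℝ E)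
        = 2 ^ p * q ^ k := by
      rw [finrank_euclideanSpace_fin]
      have e1 : ((1/2 : ℝ) ^ (k+1)) ^ (-p) = (1/2 : ℝ) ^ (((k:ℝ)+1) * (-p)) := by
        rw [← Real.rpow_natCast (1/2 : ℝ) (k+1), ← Real.rpow_mul hhalf.le]
        congr 1
        push_cast
        ring
      have e2 : ((1/2 : ℝ) ^ k) ^ (n : ℕ) = (1/2 : ℝ) ^ ((k:ℝ) * n) := by
        rw [← pow_mul, ← Real.rpow_natCast (1/2 : ℝ) (k*n)]
        congr 1
        push_cast
        ring
      have e3 : q ^ k = (1/2 : ℝ) ^ (((n:ℝ) - p) * k) := by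
        rw [hq, ← Real.rpow_natCast ((1/2:ℝ) ^ ((n:ℝ) - p)) k, ← Real.rpow_mul hhalf.le]
      have e4 : (2:ℝ) ^ p = (1/2 : ℝ) ^ (-p) := by
        rw [one_div, Real.inv_rpow (by norm_num), Real.rpow_neg (by norm_num), inv_inv]
      rw [e1, e2, e3, e4, ← Real.rpow_add hhalf, ← Real.rpow_add hhalf]
      congr 1
      ring
    calc ν (A k) = ∫⁻ x in A k, f x ∂(volume : Measure E) :=
          withDensity_apply _ (hAmeas k)
      _ ≤ ∫⁻ _ in A k, ENNReal.ofReal (((1/2 : ℝ) ^ (k+1)) ^ (-p)) ∂(volume : Measure E) :=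
          setLIntegral_mono' (hAmeas k) hdens
      _ = ENNReal.ofReal (((1/2 : ℝ) ^ (k+1)) ^ (-p)) * (volume : Measure E) (A k) :=
          setLIntegral_const _ _
      _ ≤ ENNReal.ofReal (((1/2 : ℝ) ^ (k+1)) ^ (-p)) *
            (volume : Measure E) (closedBall 0 ((1/2 : ℝ) ^ k)) := by
          gcongr
          exact diff_subset
      _ = ENNReal.ofReal (((1/2 : ℝ) ^ (k+1)) ^ (-p)) *
            (ENNReal.ofReal (((1/2 : ℝ) ^ k) ^ (Module.finrank ℝ E)) * V) := by
          rw [Measure.addHaar_closedBall _ _ (by positivity)]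
      _ = ENNReal.ofReal (2 ^ p * q ^ k) * V := by
          rw [← mul_assoc, ← ENNReal.ofReal_mul (Real.rpow_nonneg hr1.le _), hcalc]
  have hsing : ν {0} = 0 := by
    rw [hν, withDensity_apply _ (measurableSet_singleton 0)]
    exact setLIntegral_measure_zero _ _ (measure_singleton 0)
  calc ν (ball 0 1) ≤ ν ({0} ∪ ⋃ k, A k) := measure_mono hcover
    _ ≤ ν {0} + ν (⋃ k, A k) := measure_union_le _ _
    _ ≤ 0 + ∑' k, ν (A k) := by
        rw [hsing]
        gcongr
        exact measure_iUnion_le _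
    _ ≤ ∑' k, ENNReal.ofReal (2 ^ p * q ^ k) * V := by
        rw [zero_add]
        exact ENNReal.tsum_le_tsum hbound
    _ = ENNReal.ofReal (2 ^ p) * V * ∑' k, (ENNReal.ofReal q) ^ k := by
        rw [← ENNReal.tsum_mul_left]
        congr 1 with k
        rw [ENNReal.ofReal_mul (Real.rpow_nonneg (by norm_num) _), ENNReal.ofReal_pow hq0]
        ring
    _ = ENNReal.ofReal (2 ^ p) * V * (1 - ENNReal.ofReal q)⁻¹ := by
        rw [ENNReal.tsum_geometric]
    _ < ⊤ := by
        apply ENNReal.mul_lt_top (ENNReal.mul_lt_top ENNReal.ofReal_lt_top hVt)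
        rw [ENNReal.inv_lt_top, tsub_pos_iff_lt]
        exact (ENNReal.ofReal_lt_one).2 hq1

lemma nu_ball_pos (n : ℕ) (p : ℝ) (hn : 1 < n) (hp0 : 0 < p) :
    0 < ((volume : Measure (EuclideanSpace ℝ (Fin n))).withDensity
        fun x => ENNReal.ofReal (‖x‖ ^ (-p))) (ball 0 1) := by
  have hnfin : Nonempty (Fin n) := ⟨⟨0, by omega⟩⟩
  have hnt : Nontrivial (EuclideanSpace ℝ (Fin n)) := inferInstance
  set E := EuclideanSpace ℝ (Fin n)
  set f : E → ℝ≥0∞ := fun x => ENNReal.ofReal (‖x‖ ^ (-p)) with hfdef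
  set s : Set E := ball 0 1 \ {0} with hs
  have hsm : MeasurableSet s := measurableSet_ball.diff (measurableSet_singleton 0)
  have hdens : ∀ x ∈ s, (1 : ℝ≥0∞) ≤ f x := by
    intro x hx
    have hx0 : 0 < ‖x‖ := norm_pos_iff.2 (by simpa using hx.2)
    have hx1 : ‖x‖ ≤ 1 := (mem_ball_zero_iff.1 hx.1).le
    have : (1:ℝ) ≤ ‖x‖ ^ (-p) :=
      Real.one_le_rpow_of_pos_of_le_one_of_nonpos hx0 hx1 (neg_nonpos.2 hp0.le)
    simpa [hfdef] using ENNReal.one_le_ofReal.2 this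
  have h1 : (volume : Measure E) s
      ≤ ((volume : Measure E).withDensity f) (ball 0 1) := by
    calc (volume : Measure E) s = ∫⁻ _ in s, 1 ∂(volume : Measure E) :=
          (setLIntegral_one s).symm
      _ ≤ ∫⁻ x in s, f x ∂(volume : Measure E) := setLIntegral_mono' hsm hdens
      _ = ((volume : Measure E).withDensity f) s := (withDensity_apply _ hsm).symm
      _ ≤ ((volume : Measure E).withDensity f) (ball 0 1) := measure_mono diff_subset
  refine lt_of_lt_of_le ?_ h1
  rw [hs, measure_diff_null (measure_singleton 0)]
  exact measure_ball_pos _ _ one_pos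

/-- in `ℝⁿ` with `1 < p < n`, `μ` Lebesgue measure and
`dν = |x|^{-p} dμ`, for every `0 < ε ≤ p - 1` the pair `(ν,μ)` does NOT satisfy a
`(p-ε)`-balance condition. -/
theorem stmt10 (n : ℕ) (p : ℝ) (hp : 1 < p) (hpn : p < n) :
    ∀ ε : ℝ, 0 < ε → ε ≤ p - 1 →
      ¬ ∃ C : ℝ, 0 < C ∧
        PBalance
          ((volume : Measure (EuclideanSpace ℝ (Fin n))).withDensity
            fun x => ENNReal.ofReal (‖x‖ ^ (-p)))
          (volume : Measure (EuclideanSpace ℝ (Fin n)))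
          (p - ε) C := by
  intro ε hε hεp
  rintro ⟨C, hC, hbal⟩
  have hn1 : 1 < n := by exact_mod_cast hp.trans hpn
  haveI : Nonempty (Fin n) := ⟨⟨0, by omega⟩⟩
  haveI : Nontrivial (EuclideanSpace ℝ (Fin n)) := inferInstance
  set E := EuclideanSpace ℝ (Fin n) with hE
  set ν := (volume : Measure E).withDensity (fun x => ENNReal.ofReal (‖x‖ ^ (-p))) with hνdef
  have hp0 : 0 < p := by linarith
  have hν1pos : 0 < ν (ball 0 1) := nu_ball_pos n p hn1 hp0
  have hν1top : ν (ball 0 1) < ⊤ := nu_ball_lt_top n p hn1 hp0 hpn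
  have hν1 : 0 < (ν (ball (0:E) 1)).toReal := ENNReal.toReal_pos hν1pos.ne' hν1top.ne
  have hV0 : 0 < (volume : Measure E) (ball 0 1) := measure_ball_pos _ _ one_pos
  have hVt : (volume : Measure E) (ball 0 1) < ⊤ := measure_ball_lt_top
  have hV1 : 0 < ((volume : Measure E) (ball 0 1)).toReal :=
    ENNReal.toReal_pos hV0.ne' hVt.ne
  -- lower bound on diameters
  have hdiam_ge : ∀ r : ℝ, 0 < r → r ≤ diam (ball (0:E) r) := by
    intro r hr
    set x : E := EuclideanSpace.single (⟨0, by omega⟩ : Fin n) (r/2) with hx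
    have hxn : ‖x‖ = r/2 := by
      rw [hx, EuclideanSpace.norm_single]
      exact abs_of_pos (by linarith)
    have hxmem : x ∈ ball (0:E) r := mem_ball_zero_iff.2 (by rw [hxn]; linarith)
    have hymem : -x ∈ ball (0:E) r := mem_ball_zero_iff.2 (by rw [norm_neg, hxn]; linarith)
    have hd : dist x (-x) = r := by
      rw [dist_eq_norm, sub_neg_eq_add, ← two_smul ℝ x, norm_smul, hxn]
      norm_num
      ring
    calc r = dist x (-x) := hd.symm
      _ ≤ diam (ball (0:E) r) := dist_le_diam_of_mem isBounded_ball hxmem hymem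
  -- measure ratios
  have hνr : ∀ r : ℝ, 0 < r →
      (ν (ball 0 r)).toReal / (ν (ball (0:E) 1)).toReal = r ^ ((n:ℝ) - p) := by
    intro r hr
    rw [hνdef, nu_ball_scale n p r hr, ENNReal.toReal_mul,
      ENNReal.toReal_ofReal (Real.rpow_nonneg hr.le _), mul_div_assoc]
    rw [hνdef] at hν1
    rw [div_self hν1.ne', mul_one]
  have hμr : ∀ r : ℝ, 0 ≤ r →
      ((volume : Measure E) (ball 0 r)).toReal / ((volume : Measure E) (ball (0:E) 1)).toReal
        = r ^ ((n:ℝ)) := by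
    intro r hr
    rw [Measure.addHaar_ball _ _ hr, ENNReal.toReal_mul,
      ENNReal.toReal_ofReal (by positivity), mul_div_assoc, div_self hV1.ne', mul_one,
      finrank_euclideanSpace_fin, Real.rpow_natCast]
  -- the key inequality
  have hkey : ∀ r : ℝ, 0 < r → r ≤ 1 → 1 ≤ 2 ^ (p - ε) * C * r ^ ε := by
    intro r hr hr1
    have h0 := hbal 0 1 0 r one_pos (mem_ball_self one_pos) hr
      (hr1.trans (hdiam_ge 1 one_pos))
    have hD1pos : 0 < diam (ball (0:E) 1) := lt_of_lt_of_le one_pos (hdiam_ge 1 one_pos)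
    have hD1le : diam (ball (0:E) 1) ≤ 2 := by
      have := diam_ball (x := (0:E)) (le_of_lt one_pos)
      linarith
    have hA : r / 2 ≤ diam (ball (0:E) r) / diam (ball (0:E) 1) := by
      have h4 := hdiam_ge r hr
      gcongr
    have hchain : (r/2) ^ (p - ε) * r ^ ((n:ℝ) - p) ≤ C * r ^ ((n:ℝ)) := by
      calc (r/2) ^ (p - ε) * r ^ ((n:ℝ) - p)
          = (r/2) ^ (p - ε) * ((ν (ball 0 r)).toReal / (ν (ball (0:E) 1)).toReal) := by
            rw [hνr r hr]
        _ ≤ (diam (ball (0:E) r) / diam (ball (0:E) 1)) ^ (p - ε) *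
              ((ν (ball 0 r)).toReal / (ν (ball (0:E) 1)).toReal) := by
            have := Real.rpow_le_rpow (by positivity) hA (by linarith : (0:ℝ) ≤ p - ε)
            apply mul_le_mul_of_nonneg_right this
            positivity
        _ ≤ C * (((volume : Measure E) (ball 0 r)).toReal /
              ((volume : Measure E) (ball (0:E) 1)).toReal) := h0
        _ = C * r ^ ((n:ℝ)) := by rw [hμr r hr.le]
    have e5 : (r/2 : ℝ) ^ (p - ε) = r ^ (p - ε) / 2 ^ (p - ε) :=
      Real.div_rpow hr.le (by norm_num : (0:ℝ) ≤ 2) (p - ε)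
    have e6 : r ^ (p - ε) * r ^ ((n:ℝ) - p) = r ^ ((n:ℝ) - ε) := by
      rw [← Real.rpow_add hr]; congr 1; ring
    have e7 : r ^ ((n:ℝ)) = r ^ ((n:ℝ) - ε) * r ^ ε := by
      rw [← Real.rpow_add hr]; congr 1; ring
    have h2p : (0:ℝ) < 2 ^ (p - ε) := Real.rpow_pos_of_pos two_pos _
    have hX : (0:ℝ) < r ^ ((n:ℝ) - ε) := Real.rpow_pos_of_pos hr _
    rw [e5, div_mul_eq_mul_div, e6, e7] at hchain
    have h8 : r ^ ((n:ℝ) - ε) ≤ 2 ^ (p - ε) * (C * (r ^ ((n:ℝ) - ε) * r ^ ε)) :=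
      (div_le_iff₀' h2p).1 hchain
    have h9 : r ^ ((n:ℝ) - ε) * 1 ≤ r ^ ((n:ℝ) - ε) * (2 ^ (p - ε) * C * r ^ ε) := by
      rw [mul_one]
      calc r ^ ((n:ℝ) - ε) ≤ 2 ^ (p - ε) * (C * (r ^ ((n:ℝ) - ε) * r ^ ε)) := h8
        _ = r ^ ((n:ℝ) - ε) * (2 ^ (p - ε) * C * r ^ ε) := by ring
    exact le_of_mul_le_mul_left h9 hX
  -- choose a small radius to contradict `hkey`
  set K : ℝ := 2 ^ (p - ε) * C with hK
  have hKpos : 0 < K := by positivity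
  set r0 : ℝ := ((2*K)⁻¹) ^ (1/ε) with hr0def
  have hr0 : 0 < r0 := Real.rpow_pos_of_pos (by positivity) _
  set r : ℝ := min 1 r0 with hrdef
  have hrpos : 0 < r := lt_min one_pos hr0
  have h := hkey r hrpos (min_le_left _ _)
  have hle : r ^ ε ≤ (2*K)⁻¹ := by
    calc r ^ ε ≤ r0 ^ ε := Real.rpow_le_rpow hrpos.le (min_le_right _ _) hε.le
      _ = (2*K)⁻¹ := by
        rw [hr0def, ← Real.rpow_mul (by positivity), one_div, inv_mul_cancel₀ hε.ne',
          Real.rpow_one]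
  have : K * r ^ ε ≤ 1/2 := by
    calc K * r ^ ε ≤ K * (2*K)⁻¹ := by
          apply mul_le_mul_of_nonneg_left hle hKpos.le
      _ = 1/2 := by field_simp
  linarith
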